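/- Let y₁, y₂ ∈ ℕ, δ, τ > 0, and define q(k₁, k₂) = C(y₁, k₁)·C(y₂, k₂)·Σ_{j=0}^{k₁+k₂} C(k₁+k₂, j)·(−1)^{k₁+k₂−j+1}·τ⁻¹·ln(1 + δτ(y₁ + y₂ − j)) for (k₁, k₂) ∈ ℕ² with (k₁,k₂) ≠ (0,0), k₁ ≤ y₁, k₂ ≤ y₂. Then Σ over all such (k₁, k₂) of q(k₁, k₂) equals τ⁻¹·ln(1 + δτ(y₁ + y₂)). -/

import Mathlib

open Finset

lemma alt_real (n : ℕ) :
    ∑ i ∈ range (n + 1), (-1 : ℝ) ^ i * (n.choose i : ℝ) = if n = 0 then 1 else 0 := by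
  have h := Int.alternating_sum_range_choose (n := n)
  have h2 := congrArg (fun z : ℤ => (z : ℝ)) h
  push_cast at h2
  split_ifs with hn <;> simp_all

lemma inv_lemma (y : ℕ) (φ : ℕ → ℝ) :
    ∑ k ∈ range (y + 1), (-1 : ℝ) ^ k * (y.choose k : ℝ) *
      ∑ j ∈ range (k + 1), (k.choose j : ℝ) * (-1 : ℝ) ^ j * φ j = φ y := by
  have step1 : ∑ k ∈ range (y + 1), (-1 : ℝ) ^ k * (y.choose k : ℝ) *
      ∑ j ∈ range (k + 1), (k.choose j : ℝ) * (-1 : ℝ) ^ j * φ j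
      = ∑ k ∈ range (y + 1), ∑ j ∈ range (y + 1),
          (-1 : ℝ) ^ k * (y.choose k : ℝ) * ((k.choose j : ℝ) * (-1 : ℝ) ^ j * φ j) := by
    refine sum_congr rfl fun k hk => ?_
    rw [mem_range] at hk
    rw [mul_sum]
    refine Finset.sum_subset (Finset.range_subset_range.mpr (by omega)) (fun j _ hj' => ?_)
    rw [mem_range, not_lt] at hj'
    have : k < j := by omega
    simp [Nat.choose_eq_zero_of_lt this]
  rw [step1, Finset.sum_comm]
  rw [Finset.sum_eq_single y]
  · -- j = y case
    rw [Finset.sum_eq_single y]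
    · have hsq : (-1 : ℝ) ^ y * (-1 : ℝ) ^ y = 1 := by
        rw [← pow_add]; exact Even.neg_one_pow ⟨y, rfl⟩
      simp only [Nat.choose_self, Nat.cast_one, mul_one, one_mul]
      linear_combination φ y * hsq
    · intro k hk hky
      rw [mem_range] at hk
      have : k < y := lt_of_le_of_ne (by omega) hky
      simp [Nat.choose_eq_zero_of_lt this]
    · intro h; exact absurd (self_mem_range_succ y) h
  · -- j < y case: inner sum is zero
    intro j hj hjy
    rw [mem_range] at hj
    have hjle : j ≤ y := by omega
    have hrestr : ∑ k ∈ range (y + 1),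
        (-1 : ℝ) ^ k * (y.choose k : ℝ) * ((k.choose j : ℝ) * (-1 : ℝ) ^ j * φ j)
        = ∑ k ∈ Ico j (y + 1),
        (-1 : ℝ) ^ k * (y.choose k : ℝ) * ((k.choose j : ℝ) * (-1 : ℝ) ^ j * φ j) := by
      refine (Finset.sum_subset (fun x hx => ?_) (fun k hk hk' => ?_)).symm
      · rw [mem_Ico] at hx; rw [mem_range]; omega
      · rw [mem_range] at hk
        rw [mem_Ico, not_and] at hk'
        have : k < j := by omega
        simp [Nat.choose_eq_zero_of_lt this]
    rw [hrestr, Finset.sum_Ico_eq_sum_range]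
    have hyj : y + 1 - j = (y - j) + 1 := by omega
    rw [hyj]
    have heach : ∀ i ∈ range (y - j + 1),
        (-1 : ℝ) ^ (j + i) * (y.choose (j + i) : ℝ) * (((j + i).choose j : ℝ) * (-1 : ℝ) ^ j * φ j)
        = ((y.choose j : ℝ) * φ j) * ((-1 : ℝ) ^ i * ((y - j).choose i : ℝ)) := by
      intro i hi
      rw [mem_range] at hi
      have hle : j + i ≤ y := by omega
      have hcm : (y.choose (j + i) : ℝ) * ((j + i).choose j : ℝ)
          = (y.choose j : ℝ) * ((y - j).choose (j + i - j) : ℝ) := by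
        exact_mod_cast congrArg Nat.cast (Nat.choose_mul (n := y) (Nat.le_add_right j i))
      have hsub : j + i - j = i := by omega
      rw [hsub] at hcm
      have hsq : (-1 : ℝ) ^ j * (-1 : ℝ) ^ j = 1 := by
        rw [← pow_add]; exact Even.neg_one_pow ⟨j, rfl⟩
      calc (-1 : ℝ) ^ (j + i) * (y.choose (j + i) : ℝ) * (((j + i).choose j : ℝ) * (-1 : ℝ) ^ j * φ j)
          = ((-1 : ℝ) ^ j * (-1 : ℝ) ^ j) * ((y.choose (j + i) : ℝ) * ((j + i).choose j : ℝ))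
            * ((-1 : ℝ) ^ i * φ j) := by rw [pow_add]; ring
        _ = ((y.choose j : ℝ) * φ j) * ((-1 : ℝ) ^ i * ((y - j).choose i : ℝ)) := by
            rw [hsq, hcm]; ring
    rw [Finset.sum_congr rfl heach, ← mul_sum, alt_real]
    have : y - j ≠ 0 := by omega
    simp [this]
  · intro h; exact absurd (self_mem_range_succ y) h

lemma vand_sum (k₁ k₂ : ℕ) (h : ℕ → ℝ) :
    ∑ j ∈ range (k₁ + k₂ + 1), ((k₁ + k₂).choose j : ℝ) * h j
    = ∑ j₁ ∈ range (k₁ + 1), ∑ j₂ ∈ range (k₂ + 1),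
        (k₁.choose j₁ : ℝ) * (k₂.choose j₂ : ℝ) * h (j₁ + j₂) := by
  have step1 : ∑ j ∈ range (k₁ + k₂ + 1), ((k₁ + k₂).choose j : ℝ) * h j
      = ∑ j ∈ range (k₁ + k₂ + 1), ∑ p ∈ Finset.HasAntidiagonal.antidiagonal j,
          (k₁.choose p.1 : ℝ) * (k₂.choose p.2 : ℝ) * h (p.1 + p.2) := by
    refine sum_congr rfl fun j hj => ?_
    rw [Nat.add_choose_eq]
    push_cast
    rw [Finset.sum_mul]
    refine sum_congr rfl fun p hp => ?_
    rw [Finset.HasAntidiagonal.mem_antidiagonal] at hp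
    rw [hp]
  have hdisj : (↑(range (k₁ + k₂ + 1)) : Set ℕ).PairwiseDisjoint Finset.HasAntidiagonal.antidiagonal := by
    intro a _ b _ hab
    simp only [Function.onFun, Finset.disjoint_left]
    intro p hp hp'
    rw [Finset.HasAntidiagonal.mem_antidiagonal] at hp hp'
    exact hab (hp ▸ hp')
  rw [step1, ← Finset.sum_biUnion hdisj, ← Finset.sum_product']
  refine (Finset.sum_subset (fun p hp => ?_) (fun p hp hp' => ?_)).symm
  · rw [Finset.mem_product, mem_range, mem_range] at hp
    rw [Finset.mem_biUnion]
    exact ⟨p.1 + p.2, mem_range.mpr (by omega), Finset.HasAntidiagonal.mem_antidiagonal.mpr rfl⟩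
  · rw [Finset.mem_product, mem_range, mem_range, not_and_or] at hp'
    rcases hp' with h1 | h2
    · have : k₁ < p.1 := by omega
      simp [Nat.choose_eq_zero_of_lt this]
    · have : k₂ < p.2 := by omega
      simp [Nat.choose_eq_zero_of_lt this]

open Finset

noncomputable def gfun (δ τ Y : ℝ) (j : ℕ) : ℝ := τ⁻¹ * Real.log (1 + δ * τ * (Y - j))

lemma pair_term (y₁ y₂ : ℕ) (δ τ : ℝ) (k₁ k₂ : ℕ) :
    ((y₁.choose k₁ : ℝ) * (y₂.choose k₂ : ℝ) *
        ∑ j ∈ Finset.range (k₁ + k₂ + 1),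
          ((k₁ + k₂).choose j : ℝ) * (-1 : ℝ) ^ (k₁ + k₂ - j + 1) *
            τ⁻¹ * Real.log (1 + δ * τ * ((y₁ : ℝ) + (y₂ : ℝ) - j)))
    = ∑ j₁ ∈ range (k₁ + 1), ∑ j₂ ∈ range (k₂ + 1),
        (-((-1 : ℝ) ^ k₁ * (y₁.choose k₁ : ℝ) * ((k₁.choose j₁ : ℝ) * (-1 : ℝ) ^ j₁))) *
          ((-1 : ℝ) ^ k₂ * (y₂.choose k₂ : ℝ) *
            ((k₂.choose j₂ : ℝ) * (-1 : ℝ) ^ j₂ * gfun δ τ ((y₁ : ℝ) + (y₂ : ℝ)) (j₁ + j₂))) := by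
  have stepa : ∑ j ∈ Finset.range (k₁ + k₂ + 1),
      ((k₁ + k₂).choose j : ℝ) * (-1 : ℝ) ^ (k₁ + k₂ - j + 1) *
        τ⁻¹ * Real.log (1 + δ * τ * ((y₁ : ℝ) + (y₂ : ℝ) - j))
      = (∑ j ∈ Finset.range (k₁ + k₂ + 1),
          ((k₁ + k₂).choose j : ℝ) * ((-1 : ℝ) ^ j * gfun δ τ ((y₁ : ℝ) + (y₂ : ℝ)) j))
        * (-(-1 : ℝ) ^ (k₁ + k₂)) := by
    rw [Finset.sum_mul]
    refine sum_congr rfl fun j hj => ?_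
    rw [mem_range] at hj
    have hjle : j ≤ k₁ + k₂ := by omega
    have hsign : (-1 : ℝ) ^ (k₁ + k₂ - j) * (-1 : ℝ) ^ j = (-1 : ℝ) ^ (k₁ + k₂) := by
      rw [← pow_add, Nat.sub_add_cancel hjle]
    have hsq : (-1 : ℝ) ^ j * (-1 : ℝ) ^ j = 1 := by
      rw [← pow_add]; exact Even.neg_one_pow ⟨j, rfl⟩
    have h3 : (-1 : ℝ) ^ (k₁ + k₂ - j) = (-1 : ℝ) ^ (k₁ + k₂) * (-1 : ℝ) ^ j := by
      calc (-1 : ℝ) ^ (k₁ + k₂ - j) = (-1 : ℝ) ^ (k₁ + k₂ - j) * ((-1 : ℝ) ^ j * (-1 : ℝ) ^ j) := by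
            rw [hsq, mul_one]
        _ = ((-1 : ℝ) ^ (k₁ + k₂ - j) * (-1 : ℝ) ^ j) * (-1 : ℝ) ^ j := by ring
        _ = (-1 : ℝ) ^ (k₁ + k₂) * (-1 : ℝ) ^ j := by rw [hsign]
    have hsign2 : (-1 : ℝ) ^ (k₁ + k₂ - j + 1) = -((-1 : ℝ) ^ (k₁ + k₂) * (-1 : ℝ) ^ j) := by
      rw [pow_succ, h3]; ring
    rw [hsign2, gfun]
    ring
  rw [stepa, vand_sum k₁ k₂ (fun j => (-1 : ℝ) ^ j * gfun δ τ ((y₁ : ℝ) + (y₂ : ℝ)) j)]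
  rw [Finset.sum_mul, Finset.mul_sum]
  refine sum_congr rfl fun j₁ _ => ?_
  rw [Finset.sum_mul, Finset.mul_sum]
  refine sum_congr rfl fun j₂ _ => ?_
  rw [pow_add, pow_add]
  ring

theorem stmt_6 (y₁ y₂ : ℕ) (δ τ : ℝ) (hδ : 0 < δ) (hτ : 0 < τ) :
    ∑ k ∈ (Finset.range (y₁ + 1) ×ˢ Finset.range (y₂ + 1)).erase (0, 0),
      ((y₁.choose k.1 : ℝ) * (y₂.choose k.2 : ℝ) *
        ∑ j ∈ Finset.range (k.1 + k.2 + 1),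
          ((k.1 + k.2).choose j : ℝ) * (-1 : ℝ) ^ (k.1 + k.2 - j + 1) *
            τ⁻¹ * Real.log (1 + δ * τ * ((y₁ : ℝ) + (y₂ : ℝ) - j)))
    = τ⁻¹ * Real.log (1 + δ * τ * ((y₁ : ℝ) + y₂)) := by
  have hzmem : ((0, 0) : ℕ × ℕ) ∈ Finset.range (y₁ + 1) ×ˢ Finset.range (y₂ + 1) := by simp
  rw [Finset.sum_erase_eq_sub hzmem]
  have hgY : gfun δ τ ((y₁ : ℝ) + (y₂ : ℝ)) (y₁ + y₂) = 0 := by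
    have : (y₁ : ℝ) + (y₂ : ℝ) - ((y₁ + y₂ : ℕ) : ℝ) = 0 := by push_cast; ring
    rw [gfun, this, mul_zero, add_zero, Real.log_one, mul_zero]
  have hfull : ∑ k ∈ Finset.range (y₁ + 1) ×ˢ Finset.range (y₂ + 1),
      ((y₁.choose k.1 : ℝ) * (y₂.choose k.2 : ℝ) *
        ∑ j ∈ Finset.range (k.1 + k.2 + 1),
          ((k.1 + k.2).choose j : ℝ) * (-1 : ℝ) ^ (k.1 + k.2 - j + 1) *
            τ⁻¹ * Real.log (1 + δ * τ * ((y₁ : ℝ) + (y₂ : ℝ) - j))) = 0 := by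
    rw [Finset.sum_product]
    have key : ∀ k₁ ∈ range (y₁ + 1),
        (∑ k₂ ∈ range (y₂ + 1),
          ((y₁.choose k₁ : ℝ) * (y₂.choose k₂ : ℝ) *
            ∑ j ∈ Finset.range (k₁ + k₂ + 1),
              ((k₁ + k₂).choose j : ℝ) * (-1 : ℝ) ^ (k₁ + k₂ - j + 1) *
                τ⁻¹ * Real.log (1 + δ * τ * ((y₁ : ℝ) + (y₂ : ℝ) - j))))
        = -((-1 : ℝ) ^ k₁ * (y₁.choose k₁ : ℝ) *
            ∑ j₁ ∈ range (k₁ + 1), (k₁.choose j₁ : ℝ) * (-1 : ℝ) ^ j₁ *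
              gfun δ τ ((y₁ : ℝ) + (y₂ : ℝ)) (j₁ + y₂)) := by
      intro k₁ hk₁
      calc ∑ k₂ ∈ range (y₂ + 1),
            ((y₁.choose k₁ : ℝ) * (y₂.choose k₂ : ℝ) *
              ∑ j ∈ Finset.range (k₁ + k₂ + 1),
                ((k₁ + k₂).choose j : ℝ) * (-1 : ℝ) ^ (k₁ + k₂ - j + 1) *
                  τ⁻¹ * Real.log (1 + δ * τ * ((y₁ : ℝ) + (y₂ : ℝ) - j)))
          = ∑ k₂ ∈ range (y₂ + 1), ∑ j₁ ∈ range (k₁ + 1), ∑ j₂ ∈ range (k₂ + 1),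
              (-((-1 : ℝ) ^ k₁ * (y₁.choose k₁ : ℝ) * ((k₁.choose j₁ : ℝ) * (-1 : ℝ) ^ j₁))) *
                ((-1 : ℝ) ^ k₂ * (y₂.choose k₂ : ℝ) *
                  ((k₂.choose j₂ : ℝ) * (-1 : ℝ) ^ j₂ *
                    gfun δ τ ((y₁ : ℝ) + (y₂ : ℝ)) (j₁ + j₂))) :=
            sum_congr rfl fun k₂ _ => pair_term y₁ y₂ δ τ k₁ k₂
        _ = ∑ j₁ ∈ range (k₁ + 1), ∑ k₂ ∈ range (y₂ + 1), ∑ j₂ ∈ range (k₂ + 1),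
              (-((-1 : ℝ) ^ k₁ * (y₁.choose k₁ : ℝ) * ((k₁.choose j₁ : ℝ) * (-1 : ℝ) ^ j₁))) *
                ((-1 : ℝ) ^ k₂ * (y₂.choose k₂ : ℝ) *
                  ((k₂.choose j₂ : ℝ) * (-1 : ℝ) ^ j₂ *
                    gfun δ τ ((y₁ : ℝ) + (y₂ : ℝ)) (j₁ + j₂))) := Finset.sum_comm
        _ = ∑ j₁ ∈ range (k₁ + 1),
              (-((-1 : ℝ) ^ k₁ * (y₁.choose k₁ : ℝ) * ((k₁.choose j₁ : ℝ) * (-1 : ℝ) ^ j₁))) *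
                gfun δ τ ((y₁ : ℝ) + (y₂ : ℝ)) (j₁ + y₂) := by
            refine sum_congr rfl fun j₁ _ => ?_
            have hfac : ∀ k₂ ∈ range (y₂ + 1), (∑ j₂ ∈ range (k₂ + 1),
                (-((-1 : ℝ) ^ k₁ * (y₁.choose k₁ : ℝ) * ((k₁.choose j₁ : ℝ) * (-1 : ℝ) ^ j₁))) *
                  ((-1 : ℝ) ^ k₂ * (y₂.choose k₂ : ℝ) *
                    ((k₂.choose j₂ : ℝ) * (-1 : ℝ) ^ j₂ *
                      gfun δ τ ((y₁ : ℝ) + (y₂ : ℝ)) (j₁ + j₂))))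
                = (-((-1 : ℝ) ^ k₁ * (y₁.choose k₁ : ℝ) * ((k₁.choose j₁ : ℝ) * (-1 : ℝ) ^ j₁))) *
                  ((-1 : ℝ) ^ k₂ * (y₂.choose k₂ : ℝ) *
                    ∑ j₂ ∈ range (k₂ + 1), (k₂.choose j₂ : ℝ) * (-1 : ℝ) ^ j₂ *
                      gfun δ τ ((y₁ : ℝ) + (y₂ : ℝ)) (j₁ + j₂)) := by
              intro k₂ _
              rw [Finset.mul_sum, Finset.mul_sum]
            rw [Finset.sum_congr rfl hfac, ← Finset.mul_sum,
              inv_lemma y₂ (fun j₂ => gfun δ τ ((y₁ : ℝ) + (y₂ : ℝ)) (j₁ + j₂))]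
        _ = -((-1 : ℝ) ^ k₁ * (y₁.choose k₁ : ℝ) *
              ∑ j₁ ∈ range (k₁ + 1), (k₁.choose j₁ : ℝ) * (-1 : ℝ) ^ j₁ *
                gfun δ τ ((y₁ : ℝ) + (y₂ : ℝ)) (j₁ + y₂)) := by
            rw [Finset.mul_sum, ← Finset.sum_neg_distrib]
            exact sum_congr rfl fun j₁ _ => by ring
    rw [Finset.sum_congr rfl key, Finset.sum_neg_distrib,
      inv_lemma y₁ (fun j₁ => gfun δ τ ((y₁ : ℝ) + (y₂ : ℝ)) (j₁ + y₂)), hgY, neg_zero]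
  rw [hfull]
  simp only [Nat.choose_zero_right, Nat.cast_one, one_mul, Nat.add_zero, Nat.zero_add,
    Finset.sum_range_one, Nat.choose_self, Nat.cast_zero, sub_zero, pow_one, zero_sub]
  ring
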